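/- Let n be a real parameter with 2 < n < 4, let R > 0, and let φ : [0,R] → ℝ be twice continuously differentiable with φ(0) = 1, φ'(0) = 0, and φ(R) = 0. For ε > 0 set v_ε(r) = φ(r)·(ε+r²)^{−(n−2)/2}. Then there exist constants C > 0 and ε0 > 0 such that for all ε ∈ (0, ε0): | ∫_0^R v_ε'(r)²·r^{n−1} dr − ∫_0^R φ'(r)²·r^{3−n} dr − (n·(n−2)·Γ(n/2)²/(2·Γ(n)))·ε^{(2−n)/2} | ≤ C·ε^{(4−n)/2}. -/

import Mathlib

open Real Set

noncomputable section

set_option maxHeartbeats 4000000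

section AuxLemmas

open MeasureTheory Filter


lemma aux_bern {p u : ℝ} (hp : 0 ≤ p) (hu : 0 ≤ u) : 1 - p * u ≤ (1 + u) ^ (-p) := by
  have h1u : (0:ℝ) < 1 + u := by linarith
  have hpos : (0:ℝ) < (1 + u) ^ (-p) := Real.rpow_pos_of_pos h1u _
  rcases le_or_gt 1 (p * u) with h | h
  · nlinarith
  · have hlog : Real.log (1 + u) ≤ u := by
      have := Real.log_le_sub_one_of_pos h1u; linarith
    have h1 : 1 - p * u ≤ Real.exp (-(p * u)) := by
      have := Real.add_one_le_exp (-(p * u)); linarith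
    have h2 : Real.exp (-(p * u)) ≤ Real.exp (Real.log (1 + u) * (-p)) := by
      apply Real.exp_le_exp.2
      have : p * Real.log (1 + u) ≤ p * u := mul_le_mul_of_nonneg_left hlog hp
      nlinarith
    calc 1 - p * u ≤ Real.exp (-(p * u)) := h1
      _ ≤ Real.exp (Real.log (1 + u) * (-p)) := h2
      _ = (1 + u) ^ (-p) := (Real.rpow_def_of_pos h1u (-p)).symm

lemma aux_mono {x p e : ℝ} (hx : 0 < x) (hp : 0 ≤ p) (he : 0 ≤ e) :
    0 ≤ x ^ (-p) - (x + e) ^ (-p) := by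
  have := Real.rpow_le_rpow_of_nonpos hx (by linarith : x ≤ x + e) (by linarith : -p ≤ 0)
  linarith

lemma aux_mvt {x p e : ℝ} (hx : 0 < x) (hp : 0 ≤ p) (he : 0 ≤ e) :
    x ^ (-p) - (x + e) ^ (-p) ≤ p * e * x ^ (-p - 1) := by
  have hxe : x + e = x * (1 + e / x) := by field_simp
  have h1u : (0:ℝ) < 1 + e / x := by positivity
  have hsplit : (x + e) ^ (-p) = x ^ (-p) * (1 + e / x) ^ (-p) := by
    rw [hxe, Real.mul_rpow hx.le h1u.le]
  have hb := aux_bern hp (by positivity : (0:ℝ) ≤ e / x)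
  have hxp : (0:ℝ) < x ^ (-p) := Real.rpow_pos_of_pos hx _
  have : x ^ (-p) * (1 - p * (e / x)) ≤ (x + e) ^ (-p) := by
    rw [hsplit]; exact mul_le_mul_of_nonneg_left hb hxp.le
  have hxp1 : x ^ (-p - 1) = x ^ (-p) * x⁻¹ := by
    rw [← Real.rpow_neg_one x, ← Real.rpow_add hx]; ring_nf
  have : x ^ (-p) - (x + e) ^ (-p) ≤ x ^ (-p) * (p * (e / x)) := by nlinarith
  calc x ^ (-p) - (x + e) ^ (-p) ≤ x ^ (-p) * (p * (e / x)) := this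
    _ = p * e * (x ^ (-p) * x⁻¹) := by field_simp
    _ = p * e * x ^ (-p - 1) := by rw [← hxp1]

lemma aux_realBeta {a b : ℝ} (ha : 0 < a) (hb : 0 < b) :
    ∫ x in (0:ℝ)..1, x ^ (a - 1) * (1 - x) ^ (b - 1)
      = Real.Gamma a * Real.Gamma b / Real.Gamma (a + b) := by
  have key := Complex.Gamma_mul_Gamma_eq_betaIntegral
    (s := (a:ℂ)) (t := (b:ℂ)) (by simpa using ha) (by simpa using hb)
  have hbeta : Complex.betaIntegral (a:ℂ) (b:ℂ)
      = ((∫ x in (0:ℝ)..1, x ^ (a - 1) * (1 - x) ^ (b - 1) : ℝ) : ℂ) := by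
    rw [Complex.betaIntegral, ← intervalIntegral.integral_ofReal]
    apply intervalIntegral.integral_congr
    intro x hx
    rw [uIcc_of_le (by norm_num : (0:ℝ) ≤ 1)] at hx
    obtain ⟨hx0, hx1⟩ := hx
    push_cast
    rw [Complex.ofReal_cpow hx0, Complex.ofReal_cpow (by linarith : (0:ℝ) ≤ 1 - x)]
    push_cast
    ring
  have hgne : Real.Gamma (a + b) ≠ 0 := (Real.Gamma_pos_of_pos (by linarith)).ne'
  rw [hbeta, ← Complex.ofReal_add, Complex.Gamma_ofReal, Complex.Gamma_ofReal,
    Complex.Gamma_ofReal, ← Complex.ofReal_mul, ← Complex.ofReal_mul] at key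
  have := Complex.ofReal_injective key
  field_simp at this ⊢
  linarith [this]

lemma aux_betaIoi {a b : ℝ} (ha : 0 < a) (hb : 0 < b) :
    ∫ t in Ioi (0:ℝ), t ^ (a - 1) * (1 + t) ^ (-(a + b))
      = Real.Gamma a * Real.Gamma b / Real.Gamma (a + b) := by
  set f : ℝ → ℝ := fun x => x / (1 - x) with hf
  set f' : ℝ → ℝ := fun x => ((1 - x) ^ 2)⁻¹ with hf'
  have hderiv : ∀ x ∈ Ioo (0:ℝ) 1, HasDerivWithinAt f (f' x) (Ioo 0 1) x := by
    intro x hx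
    have hne : (1 - x) ≠ 0 := by intro h; linarith [hx.2]
    have : HasDerivAt f (((1:ℝ) * (1 - x) - x * (-1)) / (1 - x) ^ 2) x := by
      exact (hasDerivAt_id x).div ((hasDerivAt_id x).const_sub 1) hne
    have heq : ((1:ℝ) * (1 - x) - x * (-1)) / (1 - x) ^ 2 = f' x := by
      simp only [hf']; rw [show (1:ℝ) * (1 - x) - x * (-1) = 1 by ring, one_div]
    rw [heq] at this
    exact this.hasDerivWithinAt
  have hinj : InjOn f (Ioo 0 1) := by
    intro x hx y hy hxy
    have hx1 : (1:ℝ) - x > 0 := by linarith [hx.2]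
    have hy1 : (1:ℝ) - y > 0 := by linarith [hy.2]
    rw [hf] at hxy
    field_simp at hxy
    linarith
  have himg : f '' Ioo 0 1 = Ioi 0 := by
    ext t
    constructor
    · rintro ⟨x, hx, rfl⟩
      have : 0 < 1 - x := by linarith [hx.2]
      exact mem_Ioi.2 (div_pos hx.1 this)
    · intro ht
      have ht' : (0:ℝ) < t := ht
      refine ⟨t / (1 + t), ⟨div_pos ht' (by linarith), ?_⟩, ?_⟩
      · rw [div_lt_one (by linarith)]; linarith
      · have h1t : (1:ℝ) + t ≠ 0 := by positivity
        simp only [hf]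
        have h1 : 1 - t / (1 + t) = 1 / (1 + t) := by field_simp; ring
        rw [h1]
        field_simp
  have := MeasureTheory.integral_image_eq_integral_abs_deriv_smul measurableSet_Ioo
    hderiv hinj (fun t => t ^ (a - 1) * (1 + t) ^ (-(a + b)))
  rw [himg] at this
  rw [this]
  have heq : ∀ x ∈ Ioo (0:ℝ) 1,
      |f' x| • (f x ^ (a - 1) * (1 + f x) ^ (-(a + b)))
        = x ^ (a - 1) * (1 - x) ^ (b - 1) := by
    intro x hx
    have hx0 : (0:ℝ) < x := hx.1
    have hx1 : (0:ℝ) < 1 - x := by linarith [hx.2]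
    have h1f : 1 + f x = (1 - x)⁻¹ := by
      simp only [hf]; field_simp; ring
    have e1 : f x ^ (a - 1) = x ^ (a - 1) * ((1 - x) ^ (a - 1))⁻¹ := by
      simp only [hf]
      rw [Real.div_rpow hx0.le hx1.le, div_eq_mul_inv]
    have e2 : (1 + f x) ^ (-(a + b)) = (1 - x) ^ (a + b) := by
      rw [h1f, ← Real.rpow_neg_one (1 - x), ← Real.rpow_mul hx1.le]
      norm_num
    have e3 : |f' x| = ((1 - x) ^ 2)⁻¹ := by
      simp only [hf']
      rw [abs_inv, abs_of_nonneg (by positivity : (0:ℝ) ≤ (1 - x) ^ 2)]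
    have c1 : ((1 - x) ^ (a - 1))⁻¹ = (1 - x) ^ (-(a - 1)) := by
      rw [Real.rpow_neg hx1.le]
    have c2 : ((1 - x) ^ 2)⁻¹ = (1 - x) ^ (-2 : ℝ) := by
      rw [Real.rpow_neg hx1.le, ← Real.rpow_natCast (1 - x) 2]
      norm_num
    have c3 : (1 - x) ^ (-2 : ℝ) * ((1 - x) ^ (-(a - 1)) * (1 - x) ^ (a + b))
        = (1 - x) ^ (b - 1) := by
      rw [← Real.rpow_add hx1, ← Real.rpow_add hx1]
      ring_nf
    have : |f' x| • (f x ^ (a - 1) * (1 + f x) ^ (-(a + b)))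
        = x ^ (a - 1) * ((1 - x) ^ (-2 : ℝ) * ((1 - x) ^ (-(a - 1)) * (1 - x) ^ (a + b))) := by
      rw [smul_eq_mul, e1, e2, e3, c1, c2]; ring
    rw [this, c3]
  rw [MeasureTheory.setIntegral_congr_fun measurableSet_Ioo heq]
  rw [← MeasureTheory.integral_Ioc_eq_integral_Ioo,
    ← intervalIntegral.integral_of_le (by norm_num : (0:ℝ) ≤ 1)]
  exact aux_realBeta ha hb

lemma aux_cont_f {n : ℝ} (hn2 : 2 < n) :
    ContinuousOn (fun s : ℝ => s ^ (n + 1) * (1 + s ^ 2) ^ (-n)) (Ioi 0) := by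
  intro s hs
  have hs0 : (0:ℝ) < s := hs
  have h1 : ContinuousAt (fun s : ℝ => s ^ (n + 1)) s :=
    Real.continuousAt_rpow_const s _ (Or.inl hs0.ne')
  have h2 : ContinuousAt (fun s : ℝ => (1 + s ^ 2) ^ (-n)) s := by
    have : ContinuousAt (fun s : ℝ => 1 + s ^ 2) s := by fun_prop
    exact (Real.continuousAt_rpow_const _ _ (Or.inl (by positivity))).comp this
  exact (h1.mul h2).continuousWithinAt

lemma aux_f_le {n : ℝ} (hn2 : 2 < n) {s : ℝ} (hs : 0 < s) :
    s ^ (n + 1) * (1 + s ^ 2) ^ (-n) ≤ s ^ (1 - n) := by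
  have hs2 : (0:ℝ) < s ^ 2 := by positivity
  have key : (1 + s ^ 2) ^ (-n) ≤ (s ^ 2) ^ (-n) :=
    Real.rpow_le_rpow_of_nonpos hs2 (show s ^ 2 ≤ 1 + s ^ 2 by linarith) (by linarith)
  have h2 : (s ^ 2 : ℝ) ^ (-n) = s ^ (-2 * n) := by
    rw [← Real.rpow_natCast s 2, ← Real.rpow_mul hs.le]
    norm_num
  calc s ^ (n + 1) * (1 + s ^ 2) ^ (-n) ≤ s ^ (n + 1) * s ^ (-2 * n) := by
        apply mul_le_mul_of_nonneg_left _ (Real.rpow_nonneg hs.le _)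
        rw [h2] at key; exact key
    _ = s ^ (1 - n) := by rw [← Real.rpow_add hs]; ring_nf

lemma aux_f_ge {n : ℝ} (hn2 : 2 < n) {s : ℝ} (hs : 0 < s) :
    s ^ (1 - n) - n * s ^ (-1 - n) ≤ s ^ (n + 1) * (1 + s ^ 2) ^ (-n) := by
  have hs2 : (0:ℝ) < s ^ 2 := by positivity
  have hfact : (1 : ℝ) + s ^ 2 = s ^ 2 * (1 + (s ^ 2)⁻¹) := by
    field_simp
    ring
  have hsplit : (1 + s ^ 2) ^ (-n) = (s ^ 2) ^ (-n) * (1 + (s ^ 2)⁻¹) ^ (-n) := by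
    rw [hfact, Real.mul_rpow hs2.le (by positivity)]
  have hb := aux_bern (p := n) (u := (s ^ 2)⁻¹) (by linarith) (by positivity)
  have h2 : (s ^ 2 : ℝ) ^ (-n) = s ^ (-2 * n) := by
    rw [← Real.rpow_natCast s 2, ← Real.rpow_mul hs.le]
    norm_num
  have hpos : (0:ℝ) < s ^ (n + 1) * s ^ (-2 * n) := by positivity
  have step : s ^ (n + 1) * (1 + s ^ 2) ^ (-n)
      ≥ s ^ (n + 1) * s ^ (-2 * n) * (1 - n * (s ^ 2)⁻¹) := by
    rw [hsplit, h2]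
    rw [mul_assoc]
    apply mul_le_mul_of_nonneg_left _ (Real.rpow_nonneg hs.le _)
    exact mul_le_mul_of_nonneg_left hb (Real.rpow_nonneg (by positivity) _)
  have e1 : s ^ (n + 1) * s ^ (-2 * n) = s ^ (1 - n) := by
    rw [← Real.rpow_add hs]; ring_nf
  have e2 : s ^ (1 - n) * (s ^ 2)⁻¹ = s ^ (-1 - n) := by
    rw [← Real.rpow_natCast s 2, ← Real.rpow_neg hs.le, ← Real.rpow_add hs]
    congr 1; ring
  rw [e1] at step
  calc s ^ (1 - n) - n * s ^ (-1 - n) = s ^ (1 - n) * (1 - n * (s ^ 2)⁻¹) := by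
        rw [mul_sub, mul_one, ← e2]; ring
    _ ≤ s ^ (n + 1) * (1 + s ^ 2) ^ (-n) := step

lemma aux_int_f {n : ℝ} (hn2 : 2 < n) :
    IntegrableOn (fun s : ℝ => s ^ (n + 1) * (1 + s ^ 2) ^ (-n)) (Ioi 0) := by
  have h1 : IntegrableOn (fun s : ℝ => s ^ (n + 1) * (1 + s ^ 2) ^ (-n)) (Ioc 0 1) := by
    apply Integrable.mono' (integrableOn_const measure_Ioc_lt_top.ne : IntegrableOn (fun _ => (1:ℝ)) (Ioc (0:ℝ) 1) volume)
    · exact ((aux_cont_f hn2).mono Ioc_subset_Ioi_self).aestronglyMeasurable measurableSet_Ioc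
    · refine (ae_restrict_iff' measurableSet_Ioc).2 (ae_of_all _ fun s hs => ?_)
      have hs0 : (0:ℝ) < s := hs.1
      have hA : s ^ (n + 1) ≤ 1 :=
        Real.rpow_le_one hs0.le hs.2 (by linarith)
      have hB : (1 + s ^ 2) ^ (-n) ≤ 1 :=
        Real.rpow_le_one_of_one_le_of_nonpos (by nlinarith) (by linarith)
      have := mul_le_mul hA hB (Real.rpow_nonneg (by positivity) _) zero_le_one
      rw [norm_eq_abs, abs_of_nonneg (by positivity)]
      simpa using this
  have h2 : IntegrableOn (fun s : ℝ => s ^ (n + 1) * (1 + s ^ 2) ^ (-n)) (Ioi 1) := by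
    apply Integrable.mono' (integrableOn_Ioi_rpow_of_lt (by linarith : 1 - n < -1) one_pos)
    · exact ((aux_cont_f hn2).mono (Ioi_subset_Ioi zero_le_one)).aestronglyMeasurable
        measurableSet_Ioi
    · refine (ae_restrict_iff' measurableSet_Ioi).2 (ae_of_all _ fun s hs => ?_)
      have hs1 : (1:ℝ) < s := hs
      rw [norm_eq_abs, abs_of_nonneg (by positivity)]
      exact aux_f_le hn2 (by linarith)
  have := h1.union h2
  rwa [Ioc_union_Ioi_eq_Ioi zero_le_one] at this

lemma aux_Jval {n : ℝ} (hn2 : 2 < n) :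
    ∫ s in Ioi (0:ℝ), s ^ (n + 1) * (1 + s ^ 2) ^ (-n)
      = n / (n - 2) * (Real.Gamma (n / 2) ^ 2 / (2 * Real.Gamma n)) := by
  have h2 : (2:ℝ) ≠ 0 := two_ne_zero
  have key := MeasureTheory.integral_comp_rpow_Ioi_of_pos
    (g := fun y : ℝ => (1 / 2) * (y ^ (n / 2) * (1 + y) ^ (-n))) (p := 2) two_pos
  have hcongr : ∀ x ∈ Ioi (0:ℝ),
      (2 * x ^ ((2:ℝ) - 1)) • ((1 / 2) * ((x ^ (2:ℝ)) ^ (n / 2) * (1 + x ^ (2:ℝ)) ^ (-n)))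
        = x ^ (n + 1) * (1 + x ^ 2) ^ (-n) := by
    intro x hx
    have hx0 : (0:ℝ) < x := hx
    have e1 : (x ^ (2:ℝ)) ^ (n / 2) = x ^ n := by
      rw [← Real.rpow_mul hx0.le]; congr 1; ring
    have e2 : x ^ ((2:ℝ) - 1) = x := by norm_num [Real.rpow_one]
    have e0 : x ^ (2:ℝ) = x ^ 2 := by rw [← Real.rpow_natCast x 2]; norm_num
    rw [e1, e2, e0, smul_eq_mul]
    have e3 : x * x ^ n = x ^ (n + 1) := by
      rw [Real.rpow_add_one hx0.ne']; ring
    rw [← e3]; ring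
  rw [MeasureTheory.setIntegral_congr_fun measurableSet_Ioi hcongr] at key
  rw [key]
  rw [MeasureTheory.integral_const_mul]
  have hbeta := aux_betaIoi (a := n / 2 + 1) (b := n / 2 - 1)
    (by linarith) (by linarith)
  have ea : n / 2 + 1 - 1 = n / 2 := by ring
  have eb : n / 2 + 1 + (n / 2 - 1) = n := by ring
  rw [ea, eb] at hbeta
  have hrw : ∀ y ∈ Ioi (0:ℝ), y ^ (n / 2) * (1 + y) ^ (-n)
      = y ^ (n / 2) * (1 + y) ^ (-n) := fun _ _ => rfl
  rw [hbeta]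
  have hG1 : Real.Gamma (n / 2 + 1) = n / 2 * Real.Gamma (n / 2) :=
    Real.Gamma_add_one (by positivity : n / 2 ≠ 0)
  have hG2 : Real.Gamma (n / 2) = (n / 2 - 1) * Real.Gamma (n / 2 - 1) := by
    have := Real.Gamma_add_one (s := n / 2 - 1) (by intro h; rw [sub_eq_zero] at h; nlinarith)
    rw [show n / 2 - 1 + 1 = n / 2 by ring] at this
    exact this
  have hGpos : 0 < Real.Gamma (n / 2) := Real.Gamma_pos_of_pos (by linarith)
  have hGnpos : 0 < Real.Gamma n := Real.Gamma_pos_of_pos (by linarith)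
  have hn2' : n - 2 ≠ 0 := by intro h; linarith
  rw [hG1, hG2]
  field_simp

lemma aux_tail {n T : ℝ} (hn2 : 2 < n) (hT : 1 ≤ T) :
    |(∫ s in (0:ℝ)..T, s ^ (n + 1) * (1 + s ^ 2) ^ (-n))
      - (∫ s in Ioi (0:ℝ), s ^ (n + 1) * (1 + s ^ 2) ^ (-n)) + T ^ (2 - n) / (n - 2)|
    ≤ T ^ (-n) := by
  have hT0 : (0:ℝ) < T := by linarith
  set f : ℝ → ℝ := fun s => s ^ (n + 1) * (1 + s ^ 2) ^ (-n) with hf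
  have hint : IntegrableOn f (Ioi 0) := aux_int_f hn2
  have hint1 : IntegrableOn f (Ioc 0 T) := hint.mono_set Ioc_subset_Ioi_self
  have hint2 : IntegrableOn f (Ioi T) := hint.mono_set (Ioi_subset_Ioi hT0.le)
  have hsplit : (∫ s in Ioi (0:ℝ), f s)
      = (∫ s in Ioc (0:ℝ) T, f s) + ∫ s in Ioi T, f s := by
    rw [← MeasureTheory.setIntegral_union (Ioc_disjoint_Ioi le_rfl) measurableSet_Ioi
      hint1 hint2, Ioc_union_Ioi_eq_Ioi hT0.le]
  have hIoc : (∫ s in (0:ℝ)..T, f s) = ∫ s in Ioc (0:ℝ) T, f s :=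
    intervalIntegral.integral_of_le hT0.le
  have hpow1 : IntegrableOn (fun s : ℝ => s ^ (1 - n)) (Ioi T) :=
    integrableOn_Ioi_rpow_of_lt (by linarith) hT0
  have hpow2 : IntegrableOn (fun s : ℝ => s ^ (-1 - n)) (Ioi T) :=
    integrableOn_Ioi_rpow_of_lt (by linarith) hT0
  have hval1 : (∫ s in Ioi T, s ^ (1 - n)) = T ^ (2 - n) / (n - 2) := by
    rw [integral_Ioi_rpow_of_lt (by linarith) hT0]
    rw [show (1:ℝ) - n + 1 = 2 - n by ring]
    have hne : n - 2 ≠ 0 := by intro h; linarith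
    have hne2 : (2:ℝ) - n ≠ 0 := by intro h; linarith
    field_simp
    ring
  have hval2 : (∫ s in Ioi T, s ^ (-1 - n)) = T ^ (-n) / n := by
    rw [integral_Ioi_rpow_of_lt (by linarith) hT0]
    rw [show (-1:ℝ) - n + 1 = -n by ring]
    have hn0 : n ≠ 0 := by intro h; linarith
    field_simp
  have hdiffint : IntegrableOn (fun s : ℝ => s ^ (1 - n) - f s) (Ioi T) := hpow1.sub hint2
  have hlow : 0 ≤ ∫ s in Ioi T, (s ^ (1 - n) - f s) := by
    apply MeasureTheory.setIntegral_nonneg measurableSet_Ioi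
    intro s hs
    have : 0 < s := lt_trans hT0 hs
    have h := aux_f_le hn2 this
    show 0 ≤ s ^ (1 - n) - s ^ (n + 1) * (1 + s ^ 2) ^ (-n)
    linarith
  have hup : (∫ s in Ioi T, (s ^ (1 - n) - f s)) ≤ ∫ s in Ioi T, n * s ^ (-1 - n) := by
    apply MeasureTheory.setIntegral_mono_on hdiffint (hpow2.const_mul n) measurableSet_Ioi
    intro s hs
    have hs0 : 0 < s := lt_trans hT0 hs
    have h := aux_f_ge hn2 hs0
    show s ^ (1 - n) - s ^ (n + 1) * (1 + s ^ 2) ^ (-n) ≤ n * s ^ (-1 - n)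
    linarith
  have hupval : (∫ s in Ioi T, n * s ^ (-1 - n)) = T ^ (-n) := by
    rw [MeasureTheory.integral_const_mul, hval2]
    field_simp
  have hdiffval : (∫ s in Ioi T, (s ^ (1 - n) - f s))
      = T ^ (2 - n) / (n - 2) - ∫ s in Ioi T, f s := by
    rw [MeasureTheory.integral_sub hpow1 hint2, hval1]
  rw [hIoc, hsplit]
  rw [show (∫ s in Ioc (0:ℝ) T, f s) - ((∫ s in Ioc (0:ℝ) T, f s) + ∫ s in Ioi T, f s)
      + T ^ (2 - n) / (n - 2) = T ^ (2 - n) / (n - 2) - ∫ s in Ioi T, f s by ring]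
  rw [abs_le]
  constructor
  · have : (0:ℝ) < T ^ (-n) := Real.rpow_pos_of_pos hT0 _
    rw [← hdiffval]; linarith
  · rw [← hdiffval]; linarith [hup, hupval.symm ▸ hup]

lemma aux_subst {n R ε : ℝ} (hn2 : 2 < n) (hR : 0 < R) (hε : 0 < ε) :
    (∫ r in (0:ℝ)..R, r ^ (n + 1) * (ε + r ^ 2) ^ (-n))
      = ε ^ ((2 - n) / 2) * ∫ s in (0:ℝ)..(R / ε ^ ((1:ℝ)/2)),
          s ^ (n + 1) * (1 + s ^ 2) ^ (-n) := by
  set σ : ℝ := ε ^ ((1:ℝ)/2) with hσdef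
  have hσ : 0 < σ := Real.rpow_pos_of_pos hε _
  have hσ2 : σ ^ 2 = ε := by
    rw [hσdef, ← Real.rpow_natCast (ε ^ ((1:ℝ)/2)) 2, ← Real.rpow_mul hε.le]
    norm_num
  have hgcont : Continuous fun r : ℝ => r ^ (n + 1) * (ε + r ^ 2) ^ (-n) := by
    apply Continuous.mul
    · exact continuous_iff_continuousAt.2 fun x =>
        Real.continuousAt_rpow_const x _ (Or.inr (by linarith))
    · apply continuous_iff_continuousAt.2
      intro x
      exact (Real.continuousAt_rpow_const _ _ (Or.inl (by positivity))).comp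
        (by fun_prop : ContinuousAt (fun r : ℝ => ε + r ^ 2) x)
  have key := intervalIntegral.integral_comp_smul_deriv
    (f := fun s : ℝ => σ * s) (f' := fun _ : ℝ => σ)
    (g := fun r : ℝ => r ^ (n + 1) * (ε + r ^ 2) ^ (-n))
    (a := 0) (b := R / σ)
    (fun x _ => by simpa using (hasDerivAt_id x).const_mul σ)
    continuousOn_const hgcont
  have hend : σ * (R / σ) = R := by field_simp
  simp only [Function.comp_apply, smul_eq_mul, mul_zero] at key
  rw [hend] at key
  rw [← key]
  rw [← intervalIntegral.integral_const_mul]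
  apply intervalIntegral.integral_congr
  intro s hs
  rw [uIcc_of_le (by positivity : (0:ℝ) ≤ R / σ)] at hs
  have hs0 : 0 ≤ s := hs.1
  have e1 : (σ * s) ^ (n + 1) = σ ^ (n + 1) * s ^ (n + 1) := Real.mul_rpow hσ.le hs0
  have e2 : ε + (σ * s) ^ 2 = ε * (1 + s ^ 2) := by
    rw [mul_pow, hσ2]; ring
  have e3 : (ε * (1 + s ^ 2)) ^ (-n) = ε ^ (-n) * (1 + s ^ 2) ^ (-n) :=
    Real.mul_rpow hε.le (by positivity)
  have e4 : σ * (σ ^ (n + 1) * ε ^ (-n)) = ε ^ ((2 - n) / 2) := by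
    rw [hσdef, ← Real.rpow_mul hε.le, ← Real.rpow_one (ε ^ ((1:ℝ)/2)), ← Real.rpow_mul hε.le]
    rw [← Real.rpow_add hε, ← Real.rpow_add hε]
    congr 1
    ring
  show σ * ((σ * s) ^ (n + 1) * (ε + (σ * s) ^ 2) ^ (-n))
      = ε ^ ((2 - n) / 2) * (s ^ (n + 1) * (1 + s ^ 2) ^ (-n))
  rw [e1, e2, e3, ← e4]
  ring

lemma aux_A {n R ε : ℝ} (hn2 : 2 < n) (hR : 0 < R) (hε : 0 < ε) (hε1 : ε < 1)
    (hεR : ε < R ^ 2) :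
    |(n - 2) ^ 2 * (∫ r in (0:ℝ)..R, r ^ (n + 1) * (ε + r ^ 2) ^ (-n))
      - (n * (n - 2) * Real.Gamma (n / 2) ^ 2 / (2 * Real.Gamma n)) * ε ^ ((2 - n) / 2)
      + (n - 2) * R ^ (2 - n)|
    ≤ (n - 2) ^ 2 * R ^ (-n) * ε := by
  set σ : ℝ := ε ^ ((1:ℝ)/2) with hσdef
  have hσ : 0 < σ := Real.rpow_pos_of_pos hε _
  have hσR : σ < R := by
    have h1 : ε ^ ((1:ℝ)/2) < (R ^ 2) ^ ((1:ℝ)/2) :=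
      Real.rpow_lt_rpow hε.le hεR (by norm_num)
    have h2 : (R ^ 2) ^ ((1:ℝ)/2) = R := by
      rw [← Real.rpow_natCast R 2, ← Real.rpow_mul hR.le]
      norm_num
    rw [h2] at h1
    exact h1
  set T : ℝ := R / σ with hTdef
  have hT1 : 1 ≤ T := by
    rw [hTdef, le_div_iff₀ hσ]
    linarith
  have hT0 : 0 < T := by linarith
  have htail := aux_tail hn2 hT1
  have hsubst := aux_subst hn2 hR hε
  have hJ := aux_Jval hn2
  set q : ℝ := (2 - n) / 2 with hqdef
  set I : ℝ := ∫ s in (0:ℝ)..T, s ^ (n + 1) * (1 + s ^ 2) ^ (-n) with hIdef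
  set Jv : ℝ := ∫ s in Ioi (0:ℝ), s ^ (n + 1) * (1 + s ^ 2) ^ (-n) with hJdef
  have hεq : (0:ℝ) < ε ^ q := Real.rpow_pos_of_pos hε _
  set c : ℝ := (n - 2) ^ 2 * ε ^ q with hcdef
  have hc : 0 < c := by
    have hne : (0:ℝ) < (n - 2) ^ 2 := by nlinarith
    exact mul_pos hne hεq
  -- key rpow identities
  have hσpow : ∀ y : ℝ, σ ^ y = ε ^ (y / 2) := by
    intro y
    rw [hσdef, ← Real.rpow_mul hε.le]
    congr 1
    ring
  have hTpow : ∀ y : ℝ, T ^ y = R ^ y / ε ^ (y / 2) := by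
    intro y
    rw [hTdef, Real.div_rpow hR.le hσ.le, hσpow]
  have h1 : ε ^ q * T ^ (2 - n) = R ^ (2 - n) := by
    rw [hTpow, hqdef]
    field_simp
  have h2 : ε ^ q * T ^ (-n) = R ^ (-n) * ε := by
    have hx : ε ^ q * T ^ (-n) = R ^ (-n) * (ε ^ q * (ε ^ (-n / 2))⁻¹) := by
      rw [hTpow]; ring
    rw [hx, ← Real.rpow_neg hε.le, ← Real.rpow_add hε, hqdef]
    rw [show (2 - n) / 2 + - (-n / 2) = 1 by ring, Real.rpow_one]
  have e_cJ : c * Jv = (n * (n - 2) * Real.Gamma (n / 2) ^ 2 / (2 * Real.Gamma n)) * ε ^ q := by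
    rw [hJ, hcdef]
    have hGn : Real.Gamma n ≠ 0 := (Real.Gamma_pos_of_pos (by linarith)).ne'
    have hne : n - 2 ≠ 0 := by intro h; linarith
    field_simp
  have e_cT : c * (T ^ (2 - n) / (n - 2)) = (n - 2) * R ^ (2 - n) := by
    rw [hcdef, ← h1]
    have hne : n - 2 ≠ 0 := by intro h; linarith
    field_simp
  have e_cI : c * I = (n - 2) ^ 2 * ∫ r in (0:ℝ)..R, r ^ (n + 1) * (ε + r ^ 2) ^ (-n) := by
    rw [hsubst, hcdef]
    ring
  have hexp : (n - 2) ^ 2 * (∫ r in (0:ℝ)..R, r ^ (n + 1) * (ε + r ^ 2) ^ (-n))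
      - (n * (n - 2) * Real.Gamma (n / 2) ^ 2 / (2 * Real.Gamma n)) * ε ^ q
      + (n - 2) * R ^ (2 - n)
      = c * (I - Jv + T ^ (2 - n) / (n - 2)) := by
    rw [← e_cI, ← e_cJ, ← e_cT]
    ring
  rw [hexp, abs_mul, abs_of_pos hc]
  calc c * |I - Jv + T ^ (2 - n) / (n - 2)| ≤ c * T ^ (-n) :=
        mul_le_mul_of_nonneg_left htail hc.le
    _ = (n - 2) ^ 2 * R ^ (-n) * ε := by
        rw [hcdef, mul_assoc, h2]; ring

lemma aux_intdom {n R : ℝ} (hn2 : 2 < n) (hn4 : n < 4) (hR : 0 < R) {q : ℝ → ℝ} {c : ℝ}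
    (hcont : ContinuousOn q (Ioc 0 R))
    (hb : ∀ r ∈ Ioc (0:ℝ) R, |q r| ≤ c * r ^ (3 - n)) :
    IntervalIntegrable q volume 0 R := by
  rw [intervalIntegrable_iff_integrableOn_Ioc_of_le hR.le]
  have hint : IntegrableOn (fun r : ℝ => c * r ^ (3 - n)) (Ioc 0 R) := by
    rw [← intervalIntegrable_iff_integrableOn_Ioc_of_le hR.le]
    exact (intervalIntegral.intervalIntegrable_rpow' (by linarith)).const_mul c
  apply Integrable.mono' hint (hcont.aestronglyMeasurable measurableSet_Ioc)
  refine (ae_restrict_iff' measurableSet_Ioc).2 (ae_of_all _ fun r hr => ?_)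
  rw [norm_eq_abs]
  exact hb r hr

lemma aux_simple_bound {n R c : ℝ} (hn2 : 2 < n) (hn4 : n < 4) (hR : 0 < R) {q : ℝ → ℝ}
    (hqi : IntervalIntegrable q volume 0 R) (hc : 0 ≤ c)
    (hq1 : ∀ r ∈ Icc (0:ℝ) R, |q r| ≤ c * r ^ (3 - n)) :
    |∫ r in (0:ℝ)..R, q r| ≤ c * R ^ (4 - n) / (4 - n) := by
  have hrint : IntervalIntegrable (fun r : ℝ => c * r ^ (3 - n)) volume 0 R :=
    (intervalIntegral.intervalIntegrable_rpow' (by linarith)).const_mul c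
  calc |∫ r in (0:ℝ)..R, q r| ≤ ∫ r in (0:ℝ)..R, |q r| :=
        intervalIntegral.abs_integral_le_integral_abs hR.le
    _ ≤ ∫ r in (0:ℝ)..R, c * r ^ (3 - n) := by
        apply intervalIntegral.integral_mono_on hR.le hqi.abs hrint
        exact hq1
    _ = c * ((R ^ (4 - n) - 0 ^ (4 - n)) / (4 - n)) := by
        rw [intervalIntegral.integral_const_mul, integral_rpow (Or.inl (by linarith))]
        rw [show (3:ℝ) - n + 1 = 4 - n by ring]
    _ = c * R ^ (4 - n) / (4 - n) := by
        rw [Real.zero_rpow (by intro h; linarith : (4:ℝ) - n ≠ 0)]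
        ring

lemma aux_split_bound {n R ε c : ℝ} (hn2 : 2 < n) (hn4 : n < 4) (hR : 0 < R)
    (hε : 0 < ε) (hε1 : ε < 1) (hεR : ε < R ^ 2) {q : ℝ → ℝ}
    (hqi : IntervalIntegrable q volume 0 R) (hc : 0 ≤ c)
    (hq1 : ∀ r ∈ Icc (0:ℝ) R, |q r| ≤ c * r ^ (3 - n))
    (hq2 : ∀ r ∈ Icc (0:ℝ) R, |q r| ≤ c * ε * r ^ (1 - n)) :
    |∫ r in (0:ℝ)..R, q r| ≤ c * (1 / (4 - n) + 1 / (n - 2)) * ε ^ ((4 - n) / 2) := by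
  set σ : ℝ := ε ^ ((1:ℝ)/2) with hσdef
  have hσ : 0 < σ := Real.rpow_pos_of_pos hε _
  have hσR : σ < R := by
    have h1 : ε ^ ((1:ℝ)/2) < (R ^ 2) ^ ((1:ℝ)/2) :=
      Real.rpow_lt_rpow hε.le hεR (by norm_num)
    have h2 : (R ^ 2) ^ ((1:ℝ)/2) = R := by
      rw [← Real.rpow_natCast R 2, ← Real.rpow_mul hR.le]
      norm_num
    rwa [h2] at h1
  have hσpow : ∀ y : ℝ, σ ^ y = ε ^ (y / 2) := by
    intro y
    rw [hσdef, ← Real.rpow_mul hε.le]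
    congr 1
    ring
  have huIcc1 : uIcc (0:ℝ) σ ⊆ uIcc (0:ℝ) R := by
    rw [uIcc_of_le hσ.le, uIcc_of_le hR.le]
    exact Icc_subset_Icc le_rfl (by linarith)
  have huIcc2 : uIcc σ R ⊆ uIcc (0:ℝ) R := by
    rw [uIcc_of_le hσR.le, uIcc_of_le hR.le]
    exact Icc_subset_Icc hσ.le le_rfl
  have hqi1 : IntervalIntegrable q volume 0 σ := hqi.mono_set huIcc1
  have hqi2 : IntervalIntegrable q volume σ R := hqi.mono_set huIcc2
  have hsplit : (∫ r in (0:ℝ)..R, q r) = (∫ r in (0:ℝ)..σ, q r) + ∫ r in σ..R, q r :=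
    (intervalIntegral.integral_add_adjacent_intervals hqi1 hqi2).symm
  have hb1 : |∫ r in (0:ℝ)..σ, q r| ≤ c * σ ^ (4 - n) / (4 - n) := by
    have hrint : IntervalIntegrable (fun r : ℝ => c * r ^ (3 - n)) volume 0 σ :=
      (intervalIntegral.intervalIntegrable_rpow' (by linarith)).const_mul c
    calc |∫ r in (0:ℝ)..σ, q r| ≤ ∫ r in (0:ℝ)..σ, |q r| :=
          intervalIntegral.abs_integral_le_integral_abs hσ.le
      _ ≤ ∫ r in (0:ℝ)..σ, c * r ^ (3 - n) := by
          apply intervalIntegral.integral_mono_on hσ.le hqi1.abs hrint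
          intro r hr
          exact hq1 r ⟨hr.1, le_trans hr.2 (by linarith)⟩
      _ = c * ((σ ^ (4 - n) - 0 ^ (4 - n)) / (4 - n)) := by
          rw [intervalIntegral.integral_const_mul, integral_rpow (Or.inl (by linarith))]
          rw [show (3:ℝ) - n + 1 = 4 - n by ring]
      _ = c * σ ^ (4 - n) / (4 - n) := by
          rw [Real.zero_rpow (by intro h; linarith : (4:ℝ) - n ≠ 0)]
          ring
  have hb2 : |∫ r in σ..R, q r| ≤ c * ε * σ ^ (2 - n) / (n - 2) := by
    have hrint : IntervalIntegrable (fun r : ℝ => c * ε * r ^ (1 - n)) volume σ R := by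
      apply IntervalIntegrable.const_mul
      apply ContinuousOn.intervalIntegrable
      intro x hx
      rw [uIcc_of_le hσR.le] at hx
      exact (Real.continuousAt_rpow_const x _ (Or.inl (by linarith [hx.1] : x ≠ 0))).continuousWithinAt
    calc |∫ r in σ..R, q r| ≤ ∫ r in σ..R, |q r| :=
          intervalIntegral.abs_integral_le_integral_abs hσR.le
      _ ≤ ∫ r in σ..R, c * ε * r ^ (1 - n) := by
          apply intervalIntegral.integral_mono_on hσR.le hqi2.abs hrint
          intro r hr
          exact hq2 r ⟨le_trans hσ.le hr.1, hr.2⟩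
      _ = c * ε * ((R ^ (2 - n) - σ ^ (2 - n)) / (2 - n)) := by
          rw [intervalIntegral.integral_const_mul, integral_rpow
            (Or.inr ⟨by intro h; linarith, by
              rw [uIcc_of_le hσR.le]
              intro h
              exact absurd h.1 (not_le.2 hσ)⟩)]
          rw [show (1:ℝ) - n + 1 = 2 - n by ring]
      _ = c * ε * ((σ ^ (2 - n) - R ^ (2 - n)) / (n - 2)) := by
          congr 1
          rw [div_eq_div_iff (by intro h; linarith : (2:ℝ) - n ≠ 0)
            (by intro h; linarith : n - 2 ≠ 0)]
          ring
      _ ≤ c * ε * (σ ^ (2 - n) / (n - 2)) := by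
          apply mul_le_mul_of_nonneg_left _ (by positivity : (0:ℝ) ≤ c * ε)
          have hRn : (0:ℝ) ≤ R ^ (2 - n) := Real.rpow_nonneg hR.le _
          gcongr
          · linarith
      _ = c * ε * σ ^ (2 - n) / (n - 2) := by ring
  have hε4 : σ ^ (4 - n) = ε ^ ((4 - n) / 2) := hσpow _
  have hε2 : ε * σ ^ (2 - n) = ε ^ ((4 - n) / 2) := by
    rw [hσpow]
    nth_rewrite 1 [← Real.rpow_one ε]
    rw [← Real.rpow_add hε]
    congr 1
    ring
  calc |∫ r in (0:ℝ)..R, q r| = |(∫ r in (0:ℝ)..σ, q r) + ∫ r in σ..R, q r| := by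
        rw [hsplit]
    _ ≤ |∫ r in (0:ℝ)..σ, q r| + |∫ r in σ..R, q r| := abs_add_le _ _
    _ ≤ c * σ ^ (4 - n) / (4 - n) + c * ε * σ ^ (2 - n) / (n - 2) := add_le_add hb1 hb2
    _ = c * (1 / (4 - n) + 1 / (n - 2)) * ε ^ ((4 - n) / 2) := by
        rw [show c * ε * σ ^ (2 - n) / (n - 2) = c * (ε * σ ^ (2 - n)) / (n - 2) by ring,
          hε2, hε4]
        ring
lemma aux_mulbound {u U w : ℝ} (hu : |u| ≤ U) (hw : 0 ≤ w) : |u * w| ≤ U * w := by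
  rw [abs_mul, abs_of_nonneg hw]
  exact mul_le_mul_of_nonneg_right hu hw

lemma aux_prodbound {u U w d D : ℝ} (hu : |u| ≤ U) (hw : 0 ≤ w) (hd : 0 ≤ d) (hdD : d ≤ D) :
    |u * w * d| ≤ U * w * D := by
  have hU : 0 ≤ U := le_trans (abs_nonneg u) hu
  rw [abs_mul, abs_mul, abs_of_nonneg hw, abs_of_nonneg hd]
  have h1 : |u| * w ≤ U * w := mul_le_mul_of_nonneg_right hu hw
  have h2 : |u| * w * d ≤ U * w * d := mul_le_mul_of_nonneg_right h1 hd
  have h3 : U * w * d ≤ U * w * D := mul_le_mul_of_nonneg_left hdD (by positivity)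
  linarith

lemma aux_sqrpow {r : ℝ} (hr : 0 < r) : (r ^ 2 : ℝ) = r ^ (2:ℝ) := by
  rw [← Real.rpow_natCast r 2]
  norm_num

lemma aux_collect {r : ℝ} (hr : 0 < r) (a b : ℝ) :
    ((r ^ 2 : ℝ)) ^ a * r ^ b = r ^ (2 * a + b) := by
  rw [aux_sqrpow hr, ← Real.rpow_mul hr.le, ← Real.rpow_add hr]

end AuxLemmas

open MeasureTheory Filter in
/-- Claim 3.2: asymptotics, as `ε → 0⁺`, of the gradient term
`∫_0^R v_ε'(r)² r^{n-1} dr` for the instanton-type test function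
`v_ε(r) = φ(r)(ε+r²)^{-(n-2)/2}`. -/
theorem gradient_term_asymptotics (n R : ℝ) (hn2 : 2 < n) (hn4 : n < 4)
    (hR : 0 < R)
    (φ : ℝ → ℝ) (hφ : ContDiffOn ℝ 2 φ (Icc 0 R))
    (hφ0 : φ 0 = 1) (hφ'0 : derivWithin φ (Icc 0 R) 0 = 0) (hφR : φ R = 0) :
    ∃ C > (0:ℝ), ∃ ε0 > (0:ℝ), ∀ ε ∈ Ioo (0:ℝ) ε0,
      |(∫ r in (0:ℝ)..R,
          (derivWithin (fun s : ℝ => φ s * (ε + s ^ 2) ^ (-(n - 2) / 2))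
            (Icc 0 R) r) ^ 2 * r ^ (n - 1))
        - (∫ r in (0:ℝ)..R, (derivWithin φ (Icc 0 R) r) ^ 2 * r ^ (3 - n))
        - (n * (n - 2) * Real.Gamma (n / 2) ^ 2 / (2 * Real.Gamma n)) *
            ε ^ ((2 - n) / 2)|
      ≤ C * ε ^ ((4 - n) / 2) := by
  have hUD : UniqueDiffOn ℝ (Icc (0:ℝ) R) := uniqueDiffOn_Icc hR
  set ψ : ℝ → ℝ := derivWithin φ (Icc 0 R) with hψdef
  have hψ0 : ψ 0 = 0 := hφ'0
  have hφc : ContinuousOn φ (Icc 0 R) := hφ.continuousOn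
  have hψC1 : ContDiffOn ℝ 1 ψ (Icc 0 R) := hφ.derivWithin hUD (by norm_num)
  have hψc : ContinuousOn ψ (Icc 0 R) := hψC1.continuousOn
  set ψ₂ : ℝ → ℝ := derivWithin ψ (Icc 0 R) with hψ₂def
  have hφd : ∀ r ∈ Icc (0:ℝ) R, HasDerivWithinAt φ (ψ r) (Icc 0 R) r := by
    intro r hr
    exact ((hφ.differentiableOn (by norm_num)) r hr).hasDerivWithinAt
  have hψd : ∀ r ∈ Icc (0:ℝ) R, HasDerivWithinAt ψ (ψ₂ r) (Icc 0 R) r := by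
    intro r hr
    exact ((hψC1.differentiableOn (by norm_num)) r hr).hasDerivWithinAt
  -- bounds
  obtain ⟨C0, hC0b⟩ := (isCompact_Icc : IsCompact (Icc (0:ℝ) R)).exists_bound_of_continuousOn hφc
  obtain ⟨C2, hC2b⟩ :=
    (isCompact_Icc : IsCompact (Icc (0:ℝ) R)).exists_bound_of_continuousOn
      (hψC1.continuousOn_derivWithin hUD (by norm_num))
  have h0mem : (0:ℝ) ∈ Icc (0:ℝ) R := ⟨le_rfl, hR.le⟩
  have hC0 : 0 ≤ C0 := le_trans (norm_nonneg _) (hC0b 0 h0mem)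
  have hC2 : 0 ≤ C2 := le_trans (norm_nonneg _) (hC2b 0 h0mem)
  have hψle : ∀ r ∈ Icc (0:ℝ) R, |ψ r| ≤ C2 * r := by
    intro r hr
    have := Convex.norm_image_sub_le_of_norm_hasDerivWithin_le hψd hC2b
      (convex_Icc 0 R) h0mem hr
    rw [hψ0, sub_zero, sub_zero, Real.norm_eq_abs, Real.norm_eq_abs,
      abs_of_nonneg hr.1] at this
    exact this
  have hφ1 : ∀ r ∈ Icc (0:ℝ) R, |φ r - 1| ≤ C2 * r * r := by
    intro r hr
    have hsub : Icc (0:ℝ) r ⊆ Icc (0:ℝ) R := Icc_subset_Icc le_rfl hr.2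
    have hd : ∀ x ∈ Icc (0:ℝ) r, HasDerivWithinAt φ (ψ x) (Icc 0 r) x :=
      fun x hx => (hφd x (hsub hx)).mono hsub
    have hb : ∀ x ∈ Icc (0:ℝ) r, ‖ψ x‖ ≤ C2 * r := by
      intro x hx
      rw [Real.norm_eq_abs]
      calc |ψ x| ≤ C2 * x := hψle x (hsub hx)
        _ ≤ C2 * r := mul_le_mul_of_nonneg_left hx.2 hC2
    have := Convex.norm_image_sub_le_of_norm_hasDerivWithin_le hd hb
      (convex_Icc 0 r) ⟨le_rfl, hr.1⟩ ⟨hr.1, le_rfl⟩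
    rw [hφ0, sub_zero, Real.norm_eq_abs, Real.norm_eq_abs, abs_of_nonneg hr.1] at this
    exact this
  set B4 : ℝ := C2 * (C0 + 1) with hB4def
  have hB4 : 0 ≤ B4 := by positivity
  have hφsq : ∀ r ∈ Icc (0:ℝ) R, |(φ r) ^ 2 - 1| ≤ B4 * (r * r) := by
    intro r hr
    have h1 := hφ1 r hr
    have h2 := hC0b r hr
    rw [Real.norm_eq_abs] at h2
    have : (φ r) ^ 2 - 1 = (φ r - 1) * (φ r + 1) := by ring
    rw [this, abs_mul]
    have h3 : |φ r + 1| ≤ C0 + 1 := by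
      calc |φ r + 1| ≤ |φ r| + 1 := by simpa using abs_add_le (φ r) 1
        _ ≤ C0 + 1 := by linarith
    calc |φ r - 1| * |φ r + 1| ≤ (C2 * r * r) * (C0 + 1) := by
          apply mul_le_mul h1 h3 (abs_nonneg _)
          exact mul_nonneg (mul_nonneg hC2 hr.1) hr.1
      _ = B4 * (r * r) := by rw [hB4def]; ring
  -- constants
  set c1 : ℝ := C2 ^ 2 * (n - 2) with hc1def
  set c2m : ℝ := max (2 * (n - 2) * C0 * C2) (2 * (n - 2) * (n - 1) * C0 * C2) with hc2mdef
  set c3m : ℝ := max ((n - 2) ^ 2 * B4) ((n - 2) ^ 2 * B4 * n) with hc3mdef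
  have hc1 : 0 ≤ c1 := by
    have : (0:ℝ) ≤ C2 ^ 2 := sq_nonneg _
    nlinarith
  have hc2m : 0 ≤ c2m :=
    le_trans (mul_nonneg (mul_nonneg (by nlinarith : (0:ℝ) ≤ 2 * (n - 2)) hC0) hC2)
      (le_max_left _ _)
  have hc3m : 0 ≤ c3m := le_trans (mul_nonneg (sq_nonneg _) hB4) (le_max_left _ _)
  set Csum : ℝ := c1 * R ^ (4 - n) / (4 - n)
      + c2m * (1 / (4 - n) + 1 / (n - 2))
      + c3m * (1 / (4 - n) + 1 / (n - 2))
      + (n - 2) ^ 2 * R ^ (-n) with hCsumdef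
  have hfrac : (0:ℝ) ≤ 1 / (4 - n) + 1 / (n - 2) := by
    have h1 : (0:ℝ) < 4 - n := by linarith
    have h2 : (0:ℝ) < n - 2 := by linarith
    positivity
  have hCsum : 0 ≤ Csum := by
    have h1 : (0:ℝ) < 4 - n := by linarith
    have h2 : (0:ℝ) ≤ R ^ (4 - n) := Real.rpow_nonneg hR.le _
    have h3 : (0:ℝ) ≤ R ^ (-n) := Real.rpow_nonneg hR.le _
    have t1 : (0:ℝ) ≤ c1 * R ^ (4 - n) / (4 - n) := by positivity
    have t2 : (0:ℝ) ≤ c2m * (1 / (4 - n) + 1 / (n - 2)) := mul_nonneg hc2m hfrac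
    have t3 : (0:ℝ) ≤ c3m * (1 / (4 - n) + 1 / (n - 2)) := mul_nonneg hc3m hfrac
    have t4 : (0:ℝ) ≤ (n - 2) ^ 2 * R ^ (-n) := by positivity
    rw [hCsumdef]
    linarith
  refine ⟨Csum + 1, by linarith, min 1 (R ^ 2), by positivity, ?_⟩
  rintro ε ⟨hε0, hεlt⟩
  have hε1 : ε < 1 := lt_of_lt_of_le hεlt (min_le_left _ _)
  have hεR : ε < R ^ 2 := lt_of_lt_of_le hεlt (min_le_right _ _)
  -- function definitions
  set G1 : ℝ → ℝ := fun r => ψ r ^ 2 * (ε + r ^ 2) ^ (2 - n) * r ^ (n - 1) with hG1def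
  set G2 : ℝ → ℝ := fun r =>
    (-2) * (n - 2) * (φ r * ψ r) * r ^ n * (ε + r ^ 2) ^ (1 - n) with hG2def
  set G3a : ℝ → ℝ := fun r =>
    (n - 2) ^ 2 * ((φ r) ^ 2 - 1) * r ^ (n + 1) * (ε + r ^ 2) ^ (-n) with hG3adef
  set Aint : ℝ → ℝ := fun r => r ^ (n + 1) * (ε + r ^ 2) ^ (-n) with hAintdef
  set H1 : ℝ → ℝ := fun r => ψ r ^ 2 * r ^ (3 - n) with hH1def
  set H2 : ℝ → ℝ := fun r => (-2) * (n - 2) * (φ r * ψ r) * r ^ (2 - n) with hH2def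
  set H3a : ℝ → ℝ := fun r => (n - 2) ^ 2 * ((φ r) ^ 2 - 1) * r ^ (1 - n) with hH3adef
  have hX : ∀ r : ℝ, (0:ℝ) < ε + r ^ 2 := fun r => by positivity
  have hIeq : ∀ r ∈ Icc (0:ℝ) R,
      (derivWithin (fun s : ℝ => φ s * (ε + s ^ 2) ^ (-(n - 2) / 2)) (Icc 0 R) r) ^ 2
          * r ^ (n - 1)
        = G1 r + G2 r + (G3a r + (n - 2) ^ 2 * Aint r) := by
    intro r hr
    have hbase : HasDerivWithinAt (fun s : ℝ => ε + s ^ 2) (2 * r) (Icc 0 R) r := by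
      simpa using ((hasDerivAt_pow 2 r).const_add ε).hasDerivWithinAt
    have hpow : HasDerivWithinAt (fun s : ℝ => (ε + s ^ 2) ^ (-(n - 2) / 2))
        (2 * r * (-(n - 2) / 2) * (ε + r ^ 2) ^ (-(n - 2) / 2 - 1)) (Icc 0 R) r :=
      hbase.rpow_const (Or.inl (hX r).ne')
    have hder : HasDerivWithinAt (fun s : ℝ => φ s * (ε + s ^ 2) ^ (-(n - 2) / 2))
        (ψ r * (ε + r ^ 2) ^ (-(n - 2) / 2)
          + φ r * (2 * r * (-(n - 2) / 2) * (ε + r ^ 2) ^ (-(n - 2) / 2 - 1)))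
        (Icc 0 R) r :=
      (hφd r hr).mul hpow
    rw [hder.derivWithin (hUD r hr)]
    have hXr := hX r
    have ha : (ε + r ^ 2) ^ (-(n - 2) / 2) * (ε + r ^ 2) ^ (-(n - 2) / 2)
        = (ε + r ^ 2) ^ (2 - n) := by
      rw [← Real.rpow_add hXr]; congr 1; ring
    have hab : (ε + r ^ 2) ^ (-(n - 2) / 2) * (ε + r ^ 2) ^ (-(n - 2) / 2 - 1)
        = (ε + r ^ 2) ^ (1 - n) := by
      rw [← Real.rpow_add hXr]; congr 1; ring
    have hbb : (ε + r ^ 2) ^ (-(n - 2) / 2 - 1) * (ε + r ^ 2) ^ (-(n - 2) / 2 - 1)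
        = (ε + r ^ 2) ^ (-n) := by
      rw [← Real.rpow_add hXr]; congr 1; ring
    simp only [hG1def, hG2def, hG3adef, hAintdef]
    rcases eq_or_lt_of_le hr.1 with h0 | hr0
    · rw [← h0]
      rw [hψ0]
      rw [Real.zero_rpow (by intro h; linarith : n - 1 ≠ 0),
        Real.zero_rpow (by intro h; linarith : n ≠ 0),
        Real.zero_rpow (by intro h; linarith : n + 1 ≠ 0)]
      ring
    · have hrn := Real.rpow_add_one (ne_of_gt hr0) (n - 1)
      rw [show n - 1 + 1 = n by ring] at hrn
      have hrn1 := Real.rpow_add_one (ne_of_gt hr0) n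
      rw [hrn1, hrn, ← ha, ← hab, ← hbb]
      ring
  -- continuity
  have hXc : ∀ a : ℝ, ContinuousOn (fun r : ℝ => (ε + r ^ 2) ^ a) (Icc 0 R) := by
    intro a r _
    have h1 : ContinuousAt (fun r : ℝ => ε + r ^ 2) r := by fun_prop
    exact (h1.rpow_const (Or.inl (hX r).ne')).continuousWithinAt
  have hrpowc : ∀ a : ℝ, (0:ℝ) ≤ a → ContinuousOn (fun r : ℝ => r ^ a) (Icc 0 R) := by
    intro a ha r _
    exact (Real.continuousAt_rpow_const r a (Or.inr ha)).continuousWithinAt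
  have hrpowc' : ∀ a : ℝ, ContinuousOn (fun r : ℝ => r ^ a) (Ioc 0 R) := by
    intro a r hr
    exact (Real.continuousAt_rpow_const r a (Or.inl (ne_of_gt hr.1))).continuousWithinAt
  have hG1i : IntervalIntegrable G1 volume 0 R := by
    apply ContinuousOn.intervalIntegrable
    rw [uIcc_of_le hR.le, hG1def]
    exact ((hψc.pow 2).mul (hXc (2 - n))).mul (hrpowc (n - 1) (by linarith))
  have hG2i : IntervalIntegrable G2 volume 0 R := by
    apply ContinuousOn.intervalIntegrable
    rw [uIcc_of_le hR.le, hG2def]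
    exact ((continuousOn_const.mul (hφc.mul hψc)).mul
      (hrpowc n (by linarith))).mul (hXc (1 - n))
  have hG3ai : IntervalIntegrable G3a volume 0 R := by
    apply ContinuousOn.intervalIntegrable
    rw [uIcc_of_le hR.le, hG3adef]
    exact ((continuousOn_const.mul ((hφc.pow 2).sub continuousOn_const)).mul
      (hrpowc (n + 1) (by linarith))).mul (hXc (-n))
  have hAii : IntervalIntegrable Aint volume 0 R := by
    apply ContinuousOn.intervalIntegrable
    rw [uIcc_of_le hR.le, hAintdef]
    exact (hrpowc (n + 1) (by linarith)).mul (hXc (-n))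
  -- H integrability
  have hφcI : ContinuousOn φ (Ioc 0 R) := hφc.mono Ioc_subset_Icc_self
  have hψcI : ContinuousOn ψ (Ioc 0 R) := hψc.mono Ioc_subset_Icc_self
  have hH1i : IntervalIntegrable H1 volume 0 R := by
    apply aux_intdom hn2 hn4 hR (c := C2 ^ 2 * (R * R))
    · rw [hH1def]
      exact (hψcI.pow 2).mul (hrpowc' (3 - n))
    · intro r hr
      have hr0 : 0 < r := hr.1
      have hu : ψ r ^ 2 ≤ C2 ^ 2 * (r * r) := by
        have := hψle r ⟨hr0.le, hr.2⟩
        nlinarith [sq_abs (ψ r), abs_nonneg (ψ r)]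
      simp only [hH1def]
      rw [abs_of_nonneg (mul_nonneg (sq_nonneg _) (Real.rpow_nonneg hr0.le _))]
      calc ψ r ^ 2 * r ^ (3 - n) ≤ (C2 ^ 2 * (r * r)) * r ^ (3 - n) :=
            mul_le_mul_of_nonneg_right hu (Real.rpow_nonneg hr0.le _)
        _ ≤ (C2 ^ 2 * (R * R)) * r ^ (3 - n) := by
            apply mul_le_mul_of_nonneg_right _ (Real.rpow_nonneg hr0.le _)
            have hrR : r * r ≤ R * R := mul_le_mul hr.2 hr.2 hr0.le hR.le
            nlinarith [sq_nonneg C2]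
  have hcoefabs : |(-2 : ℝ) * (n - 2)| = 2 * (n - 2) := by
    rw [abs_of_nonpos (by nlinarith : (-2 : ℝ) * (n - 2) ≤ 0)]
    ring
  have hφψb : ∀ r ∈ Icc (0:ℝ) R, |(-2) * (n - 2) * (φ r * ψ r)| ≤ 2 * (n - 2) * C0 * (C2 * r) := by
    intro r hr
    rw [abs_mul, hcoefabs, abs_mul]
    have h1 : |φ r| ≤ C0 := by have := hC0b r hr; rwa [Real.norm_eq_abs] at this
    have h2 := hψle r hr
    have h3 : |φ r| * |ψ r| ≤ C0 * (C2 * r) :=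
      mul_le_mul h1 h2 (abs_nonneg _) hC0
    calc 2 * (n - 2) * (|φ r| * |ψ r|) ≤ 2 * (n - 2) * (C0 * (C2 * r)) :=
          mul_le_mul_of_nonneg_left h3 (by nlinarith)
      _ = 2 * (n - 2) * C0 * (C2 * r) := by ring
  have hφψb2 : ∀ r ∈ Icc (0:ℝ) R, |2 * (n - 2) * (φ r * ψ r)| ≤ 2 * (n - 2) * C0 * (C2 * r) := by
    intro r hr
    have : |2 * (n - 2) * (φ r * ψ r)| = |(-2) * (n - 2) * (φ r * ψ r)| := by
      rw [show ((-2):ℝ) * (n - 2) * (φ r * ψ r) = -(2 * (n - 2) * (φ r * ψ r)) from by ring,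
        abs_neg]
    rw [this]
    exact hφψb r hr
  have hshift : ∀ {r : ℝ}, 0 < r → ∀ a : ℝ, r ^ a * r = r ^ (a + 1) :=
    fun {r} hr a => (Real.rpow_add_one hr.ne' a).symm
  have hH2i : IntervalIntegrable H2 volume 0 R := by
    apply aux_intdom hn2 hn4 hR (c := 2 * (n - 2) * C0 * C2)
    · rw [hH2def]
      exact (continuousOn_const.mul (hφcI.mul hψcI)).mul (hrpowc' (2 - n))
    · intro r hr
      have hr0 : 0 < r := hr.1
      simp only [hH2def]
      have := aux_mulbound (hφψb r ⟨hr0.le, hr.2⟩) (Real.rpow_nonneg hr0.le (2 - n))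
      refine le_trans this (le_of_eq ?_)
      rw [show 2 * (n - 2) * C0 * (C2 * r) * r ^ (2 - n)
        = (2 * (n - 2) * C0 * C2) * (r ^ (2 - n) * r) from by ring]
      rw [hshift hr0, show (2 - n) + 1 = 3 - n from by ring]
  have hφsqb : ∀ r ∈ Icc (0:ℝ) R,
      |(-(n - 2) ^ 2) * ((φ r) ^ 2 - 1)| ≤ (n - 2) ^ 2 * (B4 * (r * r)) := by
    intro r hr
    rw [abs_mul, abs_neg, abs_of_nonneg (sq_nonneg (n - 2))]
    exact mul_le_mul_of_nonneg_left (hφsq r hr) (sq_nonneg _)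
  have hH3ai : IntervalIntegrable H3a volume 0 R := by
    apply aux_intdom hn2 hn4 hR (c := (n - 2) ^ 2 * B4)
    · rw [hH3adef]
      exact (continuousOn_const.mul ((hφcI.pow 2).sub continuousOn_const)).mul
        (hrpowc' (1 - n))
    · intro r hr
      have hr0 : 0 < r := hr.1
      simp only [hH3adef]
      have h1 : |(n - 2) ^ 2 * ((φ r) ^ 2 - 1)| ≤ (n - 2) ^ 2 * (B4 * (r * r)) := by
        rw [abs_mul, abs_of_nonneg (sq_nonneg (n - 2))]
        exact mul_le_mul_of_nonneg_left (hφsq r ⟨hr0.le, hr.2⟩) (sq_nonneg _)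
      have := aux_mulbound h1 (Real.rpow_nonneg hr0.le (1 - n))
      refine le_trans this (le_of_eq ?_)
      rw [show (n - 2) ^ 2 * (B4 * (r * r)) * r ^ (1 - n)
        = ((n - 2) ^ 2 * B4) * (r ^ (1 - n) * r * r) from by ring]
      rw [hshift hr0, hshift hr0, show (1 - n) + 1 + 1 = 3 - n from by ring]
  -- pointwise bounds on differences
  have hq1b : ∀ r ∈ Icc (0:ℝ) R, |G1 r - H1 r| ≤ (c1 * ε) * r ^ (3 - n) := by
    intro r hr
    simp only [hG1def, hH1def]
    rcases eq_or_lt_of_le hr.1 with h0 | hr0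
    · rw [← h0, hψ0]
      have : (0:ℝ) ≤ (c1 * ε) * (0:ℝ) ^ (3 - n) :=
        mul_nonneg (mul_nonneg hc1 hε0.le) (Real.rpow_nonneg le_rfl _)
      simpa using this
    · have hr2 : (0:ℝ) < r ^ 2 := by positivity
      have hm := aux_mono (x := r ^ 2) (p := n - 2) (e := ε) hr2 (by linarith) hε0.le
      have hv := aux_mvt (x := r ^ 2) (p := n - 2) (e := ε) hr2 (by linarith) hε0.le
      rw [show -(n - 2) = 2 - n from by ring, show r ^ 2 + ε = ε + r ^ 2 from by ring] at hm hv
      rw [show (2 - n) - 1 = 1 - n from by ring] at hv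
      have h3n : r ^ (3 - n) = (r ^ 2) ^ (2 - n) * r ^ (n - 1) := by
        rw [aux_collect hr0 (2 - n) (n - 1), show 2 * (2 - n) + (n - 1) = 3 - n from by ring]
      have heq : ψ r ^ 2 * (ε + r ^ 2) ^ (2 - n) * r ^ (n - 1) - ψ r ^ 2 * r ^ (3 - n)
          = (-(ψ r ^ 2)) * r ^ (n - 1) * ((r ^ 2) ^ (2 - n) - (ε + r ^ 2) ^ (2 - n)) := by
        rw [h3n]; ring
      rw [heq]
      have hu : |(-(ψ r ^ 2))| ≤ C2 ^ 2 * (r * r) := by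
        rw [abs_neg, abs_of_nonneg (sq_nonneg _)]
        have := hψle r hr
        nlinarith [sq_abs (ψ r), abs_nonneg (ψ r)]
      have hb := aux_prodbound hu (Real.rpow_nonneg hr0.le (n - 1)) hm hv
      refine le_trans hb (le_of_eq ?_)
      rw [show C2 ^ 2 * (r * r) * r ^ (n - 1) * ((n - 2) * ε * (r ^ 2) ^ (1 - n))
        = (C2 ^ 2 * (n - 2) * ε) * ((r ^ 2) ^ (1 - n) * ((r ^ 2) * r ^ (n - 1))) from by ring]
      have hA : (r ^ 2 : ℝ) * r ^ (n - 1) = r ^ (n + 1) := by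
        rw [aux_sqrpow hr0, ← Real.rpow_add hr0]
        congr 1
        ring
      rw [hA, aux_collect hr0 (1 - n) (n + 1),
        show 2 * (1 - n) + (n + 1) = 3 - n from by ring, hc1def]
  have hq2key : ∀ r ∈ Icc (0:ℝ) R, 0 < r →
      ∀ D : ℝ, 0 ≤ D → ((r ^ 2) ^ (1 - n) - (ε + r ^ 2) ^ (1 - n)) ≤ D →
      |G2 r - H2 r| ≤ 2 * (n - 2) * C0 * (C2 * r) * r ^ n * D := by
    intro r hr hr0 D hD hle
    have hr2 : (0:ℝ) < r ^ 2 := by positivity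
    have hm := aux_mono (x := r ^ 2) (p := n - 1) (e := ε) hr2 (by linarith) hε0.le
    rw [show -(n - 1) = 1 - n from by ring, show r ^ 2 + ε = ε + r ^ 2 from by ring] at hm
    have h2n : r ^ (2 - n) = (r ^ 2) ^ (1 - n) * r ^ n := by
      rw [aux_collect hr0 (1 - n) n, show 2 * (1 - n) + n = 2 - n from by ring]
    have heq : G2 r - H2 r = (2 * (n - 2) * (φ r * ψ r)) * r ^ n
        * ((r ^ 2) ^ (1 - n) - (ε + r ^ 2) ^ (1 - n)) := by
      simp only [hG2def, hH2def]
      rw [h2n]; ring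
    rw [heq]
    exact aux_prodbound (hφψb2 r hr) (Real.rpow_nonneg hr0.le n) hm hle
  have hq2b1 : ∀ r ∈ Icc (0:ℝ) R, |G2 r - H2 r| ≤ c2m * r ^ (3 - n) := by
    intro r hr
    rcases eq_or_lt_of_le hr.1 with h0 | hr0
    · simp only [hG2def, hH2def]
      rw [← h0, hψ0]
      have : (0:ℝ) ≤ c2m * (0:ℝ) ^ (3 - n) :=
        mul_nonneg hc2m (Real.rpow_nonneg le_rfl _)
      simpa using this
    · have hr2 : (0:ℝ) < r ^ 2 := by positivity
      have hXn : (0:ℝ) ≤ (ε + r ^ 2) ^ (1 - n) := Real.rpow_nonneg (hX r).le _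
      have := hq2key r hr hr0 ((r ^ 2) ^ (1 - n)) (Real.rpow_nonneg hr2.le _) (by linarith)
      refine le_trans this ?_
      rw [show 2 * (n - 2) * C0 * (C2 * r) * r ^ n * (r ^ 2) ^ (1 - n)
        = (2 * (n - 2) * C0 * C2) * ((r ^ 2) ^ (1 - n) * (r ^ n * r)) from by ring]
      rw [hshift hr0, aux_collect hr0 (1 - n) (n + 1),
        show 2 * (1 - n) + (n + 1) = 3 - n from by ring]
      exact mul_le_mul_of_nonneg_right (le_max_left _ _) (Real.rpow_nonneg hr0.le _)
  have hq2b2 : ∀ r ∈ Icc (0:ℝ) R, |G2 r - H2 r| ≤ c2m * ε * r ^ (1 - n) := by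
    intro r hr
    rcases eq_or_lt_of_le hr.1 with h0 | hr0
    · simp only [hG2def, hH2def]
      rw [← h0, hψ0]
      have : (0:ℝ) ≤ c2m * ε * (0:ℝ) ^ (1 - n) :=
        mul_nonneg (mul_nonneg hc2m hε0.le) (Real.rpow_nonneg le_rfl _)
      simpa using this
    · have hr2 : (0:ℝ) < r ^ 2 := by positivity
      have hv := aux_mvt (x := r ^ 2) (p := n - 1) (e := ε) hr2 (by linarith) hε0.le
      rw [show -(n - 1) = 1 - n from by ring, show r ^ 2 + ε = ε + r ^ 2 from by ring] at hv
      rw [show (1 - n) - 1 = -n from by ring] at hv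
      have hDnn : (0:ℝ) ≤ (n - 1) * ε * (r ^ 2) ^ (-n) :=
        mul_nonneg (mul_nonneg (by linarith) hε0.le) (Real.rpow_nonneg hr2.le _)
      have := hq2key r hr hr0 _ hDnn hv
      refine le_trans this ?_
      rw [show 2 * (n - 2) * C0 * (C2 * r) * r ^ n * ((n - 1) * ε * (r ^ 2) ^ (-n))
        = (2 * (n - 2) * (n - 1) * C0 * C2) * ε * ((r ^ 2) ^ (-n) * (r ^ n * r)) from by ring]
      rw [hshift hr0, aux_collect hr0 (-n) (n + 1),
        show 2 * (-n) + (n + 1) = 1 - n from by ring]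
      have : (0:ℝ) ≤ ε * r ^ (1 - n) := mul_nonneg hε0.le (Real.rpow_nonneg hr0.le _)
      calc (2 * (n - 2) * (n - 1) * C0 * C2) * ε * r ^ (1 - n)
          = (2 * (n - 2) * (n - 1) * C0 * C2) * (ε * r ^ (1 - n)) := by ring
        _ ≤ c2m * (ε * r ^ (1 - n)) :=
            mul_le_mul_of_nonneg_right (le_max_right _ _) this
        _ = c2m * ε * r ^ (1 - n) := by ring
  have hq3key : ∀ r ∈ Icc (0:ℝ) R, 0 < r →
      ∀ D : ℝ, 0 ≤ D → ((r ^ 2) ^ (-n) - (ε + r ^ 2) ^ (-n)) ≤ D →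
      |G3a r - H3a r| ≤ (n - 2) ^ 2 * (B4 * (r * r)) * r ^ (n + 1) * D := by
    intro r hr hr0 D hD hle
    have hr2 : (0:ℝ) < r ^ 2 := by positivity
    have hm := aux_mono (x := r ^ 2) (p := n) (e := ε) hr2 (by linarith) hε0.le
    rw [show r ^ 2 + ε = ε + r ^ 2 from by ring] at hm
    have h1n : r ^ (1 - n) = (r ^ 2) ^ (-n) * r ^ (n + 1) := by
      rw [aux_collect hr0 (-n) (n + 1), show 2 * (-n) + (n + 1) = 1 - n from by ring]
    have heq : G3a r - H3a r = ((-(n - 2) ^ 2) * ((φ r) ^ 2 - 1)) * r ^ (n + 1)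
        * ((r ^ 2) ^ (-n) - (ε + r ^ 2) ^ (-n)) := by
      simp only [hG3adef, hH3adef]
      rw [h1n]; ring
    rw [heq]
    exact aux_prodbound (hφsqb r hr) (Real.rpow_nonneg hr0.le (n + 1)) hm hle
  have hq3b1 : ∀ r ∈ Icc (0:ℝ) R, |G3a r - H3a r| ≤ c3m * r ^ (3 - n) := by
    intro r hr
    rcases eq_or_lt_of_le hr.1 with h0 | hr0
    · simp only [hG3adef, hH3adef]
      rw [← h0, hφ0]
      have : (0:ℝ) ≤ c3m * (0:ℝ) ^ (3 - n) :=
        mul_nonneg hc3m (Real.rpow_nonneg le_rfl _)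
      simpa using this
    · have hr2 : (0:ℝ) < r ^ 2 := by positivity
      have hXn : (0:ℝ) ≤ (ε + r ^ 2) ^ (-n) := Real.rpow_nonneg (hX r).le _
      have := hq3key r hr hr0 ((r ^ 2) ^ (-n)) (Real.rpow_nonneg hr2.le _) (by linarith)
      refine le_trans this ?_
      rw [show (n - 2) ^ 2 * (B4 * (r * r)) * r ^ (n + 1) * (r ^ 2) ^ (-n)
        = ((n - 2) ^ 2 * B4) * ((r ^ 2) ^ (-n) * (r ^ (n + 1) * r * r)) from by ring]
      rw [hshift hr0, hshift hr0, aux_collect hr0 (-n) (n + 1 + 1 + 1),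
        show 2 * (-n) + (n + 1 + 1 + 1) = 3 - n from by ring]
      exact mul_le_mul_of_nonneg_right (le_max_left _ _) (Real.rpow_nonneg hr0.le _)
  have hq3b2 : ∀ r ∈ Icc (0:ℝ) R, |G3a r - H3a r| ≤ c3m * ε * r ^ (1 - n) := by
    intro r hr
    rcases eq_or_lt_of_le hr.1 with h0 | hr0
    · simp only [hG3adef, hH3adef]
      rw [← h0, hφ0]
      have : (0:ℝ) ≤ c3m * ε * (0:ℝ) ^ (1 - n) :=
        mul_nonneg (mul_nonneg hc3m hε0.le) (Real.rpow_nonneg le_rfl _)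
      simpa using this
    · have hr2 : (0:ℝ) < r ^ 2 := by positivity
      have hv := aux_mvt (x := r ^ 2) (p := n) (e := ε) hr2 (by linarith) hε0.le
      rw [show r ^ 2 + ε = ε + r ^ 2 from by ring] at hv
      have hDnn : (0:ℝ) ≤ n * ε * (r ^ 2) ^ (-n - 1) :=
        mul_nonneg (mul_nonneg (by linarith) hε0.le) (Real.rpow_nonneg hr2.le _)
      have := hq3key r hr hr0 _ hDnn hv
      refine le_trans this ?_
      rw [show (n - 2) ^ 2 * (B4 * (r * r)) * r ^ (n + 1) * (n * ε * (r ^ 2) ^ (-n - 1))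
        = ((n - 2) ^ 2 * B4 * n) * ε * ((r ^ 2) ^ (-n - 1) * (r ^ (n + 1) * r * r)) from by ring]
      rw [hshift hr0, hshift hr0, aux_collect hr0 (-n - 1) (n + 1 + 1 + 1),
        show 2 * (-n - 1) + (n + 1 + 1 + 1) = 1 - n from by ring]
      have hnn : (0:ℝ) ≤ ε * r ^ (1 - n) := mul_nonneg hε0.le (Real.rpow_nonneg hr0.le _)
      calc ((n - 2) ^ 2 * B4 * n) * ε * r ^ (1 - n)
          = ((n - 2) ^ 2 * B4 * n) * (ε * r ^ (1 - n)) := by ring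
        _ ≤ c3m * (ε * r ^ (1 - n)) :=
            mul_le_mul_of_nonneg_right (le_max_right _ _) hnn
        _ = c3m * ε * r ^ (1 - n) := by ring
  -- FTC part
  set F : ℝ → ℝ := fun r => -(n - 2) * ((φ r) ^ 2 - 1) * r ^ (2 - n) with hFdef
  have hF0 : F 0 = 0 := by
    simp only [hFdef]
    rw [hφ0]
    norm_num
  have hFR : F R = (n - 2) * R ^ (2 - n) := by
    simp only [hFdef]
    rw [hφR]
    norm_num
  have hFb : ∀ r ∈ Icc (0:ℝ) R, |F r| ≤ ((n - 2) * B4) * r ^ (4 - n) := by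
    intro r hr
    rcases eq_or_lt_of_le hr.1 with h0 | hr0
    · rw [← h0, hF0]
      simp only [abs_zero]
      exact mul_nonneg (mul_nonneg (by linarith) hB4) (Real.rpow_nonneg le_rfl _)
    · simp only [hFdef]
      have hu : |-(n - 2) * ((φ r) ^ 2 - 1)| ≤ (n - 2) * (B4 * (r * r)) := by
        rw [show (-(n - 2) * ((φ r) ^ 2 - 1)) = -((n - 2) * ((φ r) ^ 2 - 1)) from by ring,
          abs_neg, abs_mul, abs_of_nonneg (by linarith : (0:ℝ) ≤ n - 2)]
        exact mul_le_mul_of_nonneg_left (hφsq r hr) (by linarith)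
      have hmb := aux_mulbound hu (Real.rpow_nonneg hr0.le (2 - n))
      refine le_trans hmb (le_of_eq ?_)
      have hA : (r * r : ℝ) * r ^ (2 - n) = r ^ (4 - n) := by
        rw [show (r * r : ℝ) = r ^ 2 from by ring, aux_sqrpow hr0, ← Real.rpow_add hr0]
        congr 1
        ring
      rw [show (n - 2) * (B4 * (r * r)) * r ^ (2 - n)
        = ((n - 2) * B4) * ((r * r) * r ^ (2 - n)) from by ring, hA]
  have hFcont : ContinuousOn F (Icc 0 R) := by
    intro x hx
    rcases eq_or_lt_of_le hx.1 with h0 | hx0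
    · rw [← h0]
      have htend0 : Filter.Tendsto (fun r : ℝ => ((n - 2) * B4) * r ^ (4 - n))
          (nhdsWithin 0 (Icc 0 R)) (nhds 0) := by
        have hc : ContinuousAt (fun r : ℝ => r ^ (4 - n)) 0 :=
          Real.continuousAt_rpow_const _ _ (Or.inr (by linarith))
        have h1 : Filter.Tendsto (fun r : ℝ => r ^ (4 - n)) (nhdsWithin 0 (Icc 0 R))
            (nhds ((0:ℝ) ^ (4 - n))) := hc.continuousWithinAt
        rw [Real.zero_rpow (by intro h; linarith : (4:ℝ) - n ≠ 0)] at h1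
        have h2 := h1.const_mul ((n - 2) * B4)
        simpa using h2
      have hFtend : Filter.Tendsto F (nhdsWithin 0 (Icc 0 R)) (nhds 0) := by
        apply squeeze_zero_norm' ?_ htend0
        filter_upwards [self_mem_nhdsWithin] with r hr
        rw [Real.norm_eq_abs]
        exact hFb r hr
      have : Filter.Tendsto F (nhdsWithin 0 (Icc 0 R)) (nhds (F 0)) := by rwa [hF0]
      exact this
    · have h1 : ContinuousWithinAt (fun r : ℝ => -(n - 2) * ((φ r) ^ 2 - 1)) (Icc 0 R) x :=
        (continuousOn_const.mul ((hφc.pow 2).sub continuousOn_const)) x hx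
      have h2 : ContinuousWithinAt (fun r : ℝ => r ^ (2 - n)) (Icc 0 R) x :=
        (Real.continuousAt_rpow_const x _ (Or.inl hx0.ne')).continuousWithinAt
      have := h1.mul h2
      rw [hFdef]
      exact this
  have hFderiv : ∀ r ∈ Ioo (0:ℝ) R, HasDerivAt F (H2 r + H3a r) r := by
    intro r hr
    have hmem : r ∈ Icc (0:ℝ) R := ⟨hr.1.le, hr.2.le⟩
    have hnhds : Icc (0:ℝ) R ∈ nhds r := Icc_mem_nhds hr.1 hr.2
    have hφat : HasDerivAt φ (ψ r) r := (hφd r hmem).hasDerivAt hnhds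
    have h1 := ((hφat.pow 2).sub_const 1).const_mul (-(n - 2))
    have h2 : HasDerivAt (fun s : ℝ => s ^ (2 - n)) ((2 - n) * r ^ (2 - n - 1)) r :=
      Real.hasDerivAt_rpow_const (Or.inl hr.1.ne')
    have h3 := h1.mul h2
    rw [hFdef]
    refine h3.congr_deriv ?_
    simp only [hH2def, hH3adef, pow_one, Nat.cast_ofNat, Pi.pow_apply]
    rw [show (2 : ℝ) - n - 1 = 1 - n from by ring]
    ring
  have hH23i : IntervalIntegrable (fun r => H2 r + H3a r) volume 0 R := hH2i.add hH3ai
  have hFTC : (∫ r in (0:ℝ)..R, (H2 r + H3a r)) = (n - 2) * R ^ (2 - n) := by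
    rw [intervalIntegral.integral_eq_sub_of_hasDerivAt_of_le hR.le hFcont hFderiv hH23i,
      hFR, hF0, sub_zero]
  have hFTC' : (∫ r in (0:ℝ)..R, H2 r) + (∫ r in (0:ℝ)..R, H3a r)
      = (n - 2) * R ^ (2 - n) := by
    rw [← intervalIntegral.integral_add hH2i hH3ai]
    exact hFTC
  -- assembly
  have hIfull : (∫ r in (0:ℝ)..R,
      (derivWithin (fun s : ℝ => φ s * (ε + s ^ 2) ^ (-(n - 2) / 2)) (Icc 0 R) r) ^ 2
        * r ^ (n - 1))
      = (∫ r in (0:ℝ)..R, G1 r) + (∫ r in (0:ℝ)..R, G2 r)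
        + ((∫ r in (0:ℝ)..R, G3a r) + (n - 2) ^ 2 * ∫ r in (0:ℝ)..R, Aint r) := by
    rw [intervalIntegral.integral_congr
      (g := fun r => G1 r + G2 r + (G3a r + (n - 2) ^ 2 * Aint r))
      (fun r hr => hIeq r (by rwa [uIcc_of_le hR.le] at hr))]
    rw [intervalIntegral.integral_add (hG1i.add hG2i) (hG3ai.add (hAii.const_mul _)),
      intervalIntegral.integral_add hG1i hG2i,
      intervalIntegral.integral_add hG3ai (hAii.const_mul _),
      intervalIntegral.integral_const_mul]
  have hq1i : IntervalIntegrable (fun r => G1 r - H1 r) volume 0 R := hG1i.sub hH1i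
  have hq2i : IntervalIntegrable (fun r => G2 r - H2 r) volume 0 R := hG2i.sub hH2i
  have hq3i : IntervalIntegrable (fun r => G3a r - H3a r) volume 0 R := hG3ai.sub hH3ai
  have hd1 : (∫ r in (0:ℝ)..R, (G1 r - H1 r))
      = (∫ r in (0:ℝ)..R, G1 r) - ∫ r in (0:ℝ)..R, H1 r :=
    intervalIntegral.integral_sub hG1i hH1i
  have hd2 : (∫ r in (0:ℝ)..R, (G2 r - H2 r))
      = (∫ r in (0:ℝ)..R, G2 r) - ∫ r in (0:ℝ)..R, H2 r :=
    intervalIntegral.integral_sub hG2i hH2i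
  have hd3 : (∫ r in (0:ℝ)..R, (G3a r - H3a r))
      = (∫ r in (0:ℝ)..R, G3a r) - ∫ r in (0:ℝ)..R, H3a r :=
    intervalIntegral.integral_sub hG3ai hH3ai
  have hεle : ε ≤ ε ^ ((4 - n) / 2) := by
    nth_rewrite 1 [← Real.rpow_one ε]
    exact Real.rpow_le_rpow_of_exponent_ge hε0 hε1.le (by linarith)
  have hεq4 : (0:ℝ) ≤ ε ^ ((4 - n) / 2) := Real.rpow_nonneg hε0.le _
  have hE1 : |∫ r in (0:ℝ)..R, (G1 r - H1 r)|
      ≤ (c1 * R ^ (4 - n) / (4 - n)) * ε ^ ((4 - n) / 2) := by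
    have h := aux_simple_bound hn2 hn4 hR hq1i (mul_nonneg hc1 hε0.le) hq1b
    refine le_trans h ?_
    rw [show (c1 * ε) * R ^ (4 - n) / (4 - n) = (c1 * R ^ (4 - n) / (4 - n)) * ε from by ring]
    exact mul_le_mul_of_nonneg_left hεle
      (div_nonneg (mul_nonneg hc1 (Real.rpow_nonneg hR.le _)) (by linarith))
  have hE2 := aux_split_bound hn2 hn4 hR hε0 hε1 hεR hq2i hc2m hq2b1 hq2b2
  have hE3 := aux_split_bound hn2 hn4 hR hε0 hε1 hεR hq3i hc3m hq3b1 hq3b2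
  have hE4pre := aux_A hn2 hR hε0 hε1 hεR
  rw [← hAintdef] at hE4pre
  have hE4 : |(n - 2) ^ 2 * (∫ r in (0:ℝ)..R, Aint r)
      - n * (n - 2) * Real.Gamma (n / 2) ^ 2 / (2 * Real.Gamma n) * ε ^ ((2 - n) / 2)
      + (n - 2) * R ^ (2 - n)|
      ≤ ((n - 2) ^ 2 * R ^ (-n)) * ε ^ ((4 - n) / 2) := by
    refine le_trans hE4pre ?_
    exact mul_le_mul_of_nonneg_left hεle
      (mul_nonneg (sq_nonneg _) (Real.rpow_nonneg hR.le _))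
  have key : (∫ r in (0:ℝ)..R,
        (derivWithin (fun s : ℝ => φ s * (ε + s ^ 2) ^ (-(n - 2) / 2)) (Icc 0 R) r) ^ 2
          * r ^ (n - 1))
      - (∫ r in (0:ℝ)..R, H1 r)
      - n * (n - 2) * Real.Gamma (n / 2) ^ 2 / (2 * Real.Gamma n) * ε ^ ((2 - n) / 2)
      = (∫ r in (0:ℝ)..R, (G1 r - H1 r)) + (∫ r in (0:ℝ)..R, (G2 r - H2 r))
        + (∫ r in (0:ℝ)..R, (G3a r - H3a r))
        + ((n - 2) ^ 2 * (∫ r in (0:ℝ)..R, Aint r)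
          - n * (n - 2) * Real.Gamma (n / 2) ^ 2 / (2 * Real.Gamma n) * ε ^ ((2 - n) / 2)
          + (n - 2) * R ^ (2 - n)) := by
    rw [hIfull, hd1, hd2, hd3]
    linear_combination hFTC'
  rw [key]
  have habs4 : ∀ a b c d : ℝ, |a + b + c + d| ≤ |a| + |b| + |c| + |d| := by
    intro a b c d
    calc |a + b + c + d| ≤ |a + b + c| + |d| := abs_add_le _ _
      _ ≤ (|a + b| + |c|) + |d| := add_le_add_left (abs_add_le _ _) _
      _ ≤ |a| + |b| + |c| + |d| := by linarith [abs_add_le a b]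
  refine le_trans (habs4 _ _ _ _) ?_
  have hsum := add_le_add (add_le_add (add_le_add hE1 hE2) hE3) hE4
  refine le_trans hsum ?_
  have heqs : (c1 * R ^ (4 - n) / (4 - n)) * ε ^ ((4 - n) / 2)
      + c2m * (1 / (4 - n) + 1 / (n - 2)) * ε ^ ((4 - n) / 2)
      + c3m * (1 / (4 - n) + 1 / (n - 2)) * ε ^ ((4 - n) / 2)
      + ((n - 2) ^ 2 * R ^ (-n)) * ε ^ ((4 - n) / 2)
      = Csum * ε ^ ((4 - n) / 2) := by
    rw [hCsumdef]
    ring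
  rw [heqs]
  have h := mul_le_mul_of_nonneg_right
    (le_add_of_nonneg_right zero_le_one : Csum ≤ Csum + 1) hεq4
  linarith

end
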